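/- Let C > 0, M > 0, R₁ > 2M, and let R : [0,T) → ℝ be continuously differentiable with R(0) ≤ R₁, R(t) > 2M for all t, and satisfying R′(t) ≤ −C·(R(t) − 2M)/R(t). Then for all t ∈ [0,T), R(t) ≤ 2M + (R₁ − 2M)·e^{(R₁ − 2M − Ct)/(2M)}. -/

import Mathlib

open Real Set

theorem support_estimate_exponential
    (C M R₁ T : ℝ) (hC : 0 < C) (hM : 0 < M) (hR₁ : 2 * M < R₁)
    (R R' : ℝ → ℝ)
    (hderiv : ∀ t ∈ Ico 0 T, HasDerivAt R (R' t) t)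
    (hR0 : R 0 ≤ R₁)
    (hRgt : ∀ t ∈ Ico 0 T, 2 * M < R t)
    (hineq : ∀ t ∈ Ico 0 T, R' t ≤ -C * (R t - 2 * M) / R t) :
    ∀ t ∈ Ico 0 T,
      R t ≤ 2 * M + (R₁ - 2 * M) * Real.exp ((R₁ - 2 * M - C * t) / (2 * M)) := by
  intro t ht
  obtain ⟨ht0, htT⟩ := ht
  have h0mem : (0 : ℝ) ∈ Ico 0 T := ⟨le_refl 0, lt_of_le_of_lt ht0 htT⟩
  set G : ℝ → ℝ := fun s => R s + 2 * M * Real.log (R s - 2 * M) + C * s with hG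
  -- derivative of G on Ico 0 T
  have hGderiv : ∀ s ∈ Ico 0 T,
      HasDerivAt G (R' s + 2 * M * (R' s / (R s - 2 * M)) + C) s := by
    intro s hs
    have hpos : (0 : ℝ) < R s - 2 * M := by linarith [hRgt s hs]
    have h1 : HasDerivAt (fun u => R u - 2 * M) (R' s) s := (hderiv s hs).sub_const _
    have h2 : HasDerivAt (fun u => Real.log (R u - 2 * M)) (R' s / (R s - 2 * M)) s :=
      h1.log (ne_of_gt hpos)
    exact ((hderiv s hs).add ((h2.const_mul (2 * M)))).add
      ((hasDerivAt_id s).const_mul C |>.congr_deriv (by ring)) |>.congr_deriv (by ring)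
  -- G is antitone on Ico 0 T
  have hanti : AntitoneOn G (Ico 0 T) := by
    apply antitoneOn_of_deriv_nonpos (convex_Ico 0 T)
    · intro s hs
      exact (hGderiv s hs).continuousAt.continuousWithinAt
    · intro s hs
      rw [interior_Ico] at hs
      exact ((hGderiv s (Ioo_subset_Ico_self hs)).differentiableAt).differentiableWithinAt
    · intro s hs
      rw [interior_Ico] at hs
      have hs' : s ∈ Ico 0 T := Ioo_subset_Ico_self hs
      rw [(hGderiv s hs').deriv]
      have hpos : (0 : ℝ) < R s - 2 * M := by linarith [hRgt s hs']
      have hRpos : (0 : ℝ) < R s := by linarith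
      have h := hineq s hs'
      have key : R' s * (R s / (R s - 2 * M)) ≤ -C := by
        have hfrac : (0 : ℝ) < R s / (R s - 2 * M) := div_pos hRpos hpos
        have := mul_le_mul_of_nonneg_right h (le_of_lt hfrac)
        calc R' s * (R s / (R s - 2 * M)) ≤ -C * (R s - 2 * M) / R s * (R s / (R s - 2 * M)) := this
          _ = -C := by field_simp
      have expand : R' s + 2 * M * (R' s / (R s - 2 * M)) = R' s * (R s / (R s - 2 * M)) := by
        field_simp
        ring
      rw [expand]
      linarith
  have hG0 : G t ≤ G 0 := hanti h0mem ⟨ht0, htT⟩ ht0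
  have hRtgt : 2 * M < R t := hRgt t ⟨ht0, htT⟩
  have hR0gt : 2 * M < R 0 := hRgt 0 h0mem
  have hlogmono : Real.log (R 0 - 2 * M) ≤ Real.log (R₁ - 2 * M) := by
    apply Real.log_le_log (by linarith)
    linarith
  -- unfold G
  have hineq2 : R t + 2 * M * Real.log (R t - 2 * M) + C * t
      ≤ R₁ + 2 * M * Real.log (R₁ - 2 * M) := by
    have : G 0 = R 0 + 2 * M * Real.log (R 0 - 2 * M) := by simp [hG]
    have hGt : G t = R t + 2 * M * Real.log (R t - 2 * M) + C * t := rfl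
    nlinarith [hG0, hlogmono, hM]
  have hlog : Real.log (R t - 2 * M) ≤ Real.log (R₁ - 2 * M) + (R₁ - 2 * M - C * t) / (2 * M) := by
    have h2M : (0 : ℝ) < 2 * M := by linarith
    rw [← sub_le_iff_le_add', le_div_iff₀ h2M]
    nlinarith [hineq2, hRtgt]
  have := Real.exp_le_exp.mpr hlog
  rw [Real.exp_add, Real.exp_log (by linarith : (0:ℝ) < R t - 2 * M),
    Real.exp_log (by linarith : (0:ℝ) < R₁ - 2 * M)] at this
  linarith
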